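/- (Monotonicity of the conditional mean in the observation) Let X ≥ 0 be non-degenerate with Z | X ∼ Poisson(γX) for fixed γ > 0. Then the map z ↦ E[X | Z = z] is increasing in z, i.e., for every z ≥ 1 with P(Z = z−1), P(Z = z) > 0: E[X | Z = z] ≥ E[X | Z = z−1]. The key step is the log-convexity inequality P(Z = z)² ≤ ((z+1)/z)·P(Z = z+1)·P(Z = z−1), which follows from Cauchy–Schwarz applied to U = γX. -/

import Mathlib

open MeasureTheory

-- Cauchy–Schwarz for the moments I n = ∫ U^n e^{-U}, U ≥ 0 measurable, probability measure.
lemma cs_aux {Ω : Type*} [MeasurableSpace Ω] (μ : Measure Ω) [IsProbabilityMeasure μ]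
    (U : Ω → ℝ) (hUm : Measurable U) (hUnn : ∀ ω, 0 ≤ U ω) (m : ℕ) :
    (∫ ω, U ω ^ (m + 1) * Real.exp (-(U ω)) ∂μ) ^ 2
      ≤ (∫ ω, U ω ^ m * Real.exp (-(U ω)) ∂μ)
        * (∫ ω, U ω ^ (m + 2) * Real.exp (-(U ω)) ∂μ) := by
  set f : Ω → ℝ := fun ω => Real.sqrt (U ω ^ m * Real.exp (-(U ω))) with hf
  set g : Ω → ℝ := fun ω => Real.sqrt (U ω ^ (m + 2) * Real.exp (-(U ω))) with hg
  have hnn : ∀ (n : ℕ) (ω : Ω), 0 ≤ U ω ^ n * Real.exp (-(U ω)) := fun n ω => mul_nonneg (pow_nonneg (hUnn ω) n) (Real.exp_pos _).le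
  have hbd : ∀ (n : ℕ) (ω : Ω), U ω ^ n * Real.exp (-(U ω)) ≤ n.factorial := by
    intro n ω
    have h := Real.pow_div_factorial_le_exp (U ω) (hUnn ω) n
    rw [div_le_iff₀ (by positivity)] at h
    rw [Real.exp_neg]
    rw [mul_inv_le_iff₀ (Real.exp_pos _)]
    linarith [h]
  have hmeas : ∀ n : ℕ, Measurable fun ω => U ω ^ n * Real.exp (-(U ω)) := fun n =>
    (hUm.pow_const n).mul ((hUm.neg).exp)
  have hmem : ∀ n : ℕ, MemLp (fun ω => Real.sqrt (U ω ^ n * Real.exp (-(U ω)))) 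
      (ENNReal.ofReal 2) μ := by
    intro n
    refine MemLp.of_bound ((hmeas n).sqrt.aestronglyMeasurable) (Real.sqrt n.factorial) ?_
    filter_upwards with ω
    rw [Real.norm_of_nonneg (Real.sqrt_nonneg _)]
    exact Real.sqrt_le_sqrt (hbd n ω)
  have key : (∫ ω, f ω * g ω ∂μ)
      ≤ (∫ ω, f ω ^ (2:ℝ) ∂μ) ^ ((1:ℝ)/2) * (∫ ω, g ω ^ (2:ℝ) ∂μ) ^ ((1:ℝ)/2) :=
    integral_mul_le_Lp_mul_Lq_of_nonneg (Real.holderConjugate_iff_eq_conjExponent (by norm_num) |>.mpr (by norm_num))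
      (Filter.Eventually.of_forall fun ω => Real.sqrt_nonneg _)
      (Filter.Eventually.of_forall fun ω => Real.sqrt_nonneg _) (hmem m) (hmem (m+2))
  have hfg : ∀ ω, f ω * g ω = U ω ^ (m + 1) * Real.exp (-(U ω)) := by
    intro ω
    rw [hf, hg, ← Real.sqrt_mul (hnn m ω)]
    have : U ω ^ m * Real.exp (-(U ω)) * (U ω ^ (m + 2) * Real.exp (-(U ω)))
        = (U ω ^ (m + 1) * Real.exp (-(U ω))) ^ 2 := by ring
    rw [this, Real.sqrt_sq (hnn (m+1) ω)]
  have hf2 : ∀ ω, f ω ^ (2:ℝ) = U ω ^ m * Real.exp (-(U ω)) := by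
    intro ω
    rw [hf, show (2:ℝ) = ((2:ℕ):ℝ) by norm_num, Real.rpow_natCast, Real.sq_sqrt (hnn m ω)]
  have hg2 : ∀ ω, g ω ^ (2:ℝ) = U ω ^ (m+2) * Real.exp (-(U ω)) := by
    intro ω
    rw [hg, show (2:ℝ) = ((2:ℕ):ℝ) by norm_num, Real.rpow_natCast, Real.sq_sqrt (hnn (m+2) ω)]
  rw [integral_congr_ae (Filter.Eventually.of_forall hfg),
      integral_congr_ae (Filter.Eventually.of_forall hf2),
      integral_congr_ae (Filter.Eventually.of_forall hg2)] at key
  have hI : ∀ n : ℕ, 0 ≤ ∫ ω, U ω ^ n * Real.exp (-(U ω)) ∂μ := fun n =>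
    integral_nonneg (hnn n)
  calc (∫ ω, U ω ^ (m + 1) * Real.exp (-(U ω)) ∂μ) ^ 2
      ≤ ((∫ ω, U ω ^ m * Real.exp (-(U ω)) ∂μ) ^ ((1:ℝ)/2)
        * (∫ ω, U ω ^ (m+2) * Real.exp (-(U ω)) ∂μ) ^ ((1:ℝ)/2)) ^ 2 := by
        apply pow_le_pow_left₀ (integral_nonneg (hnn (m+1))) key
    _ = _ := by
        rw [mul_pow, ← Real.rpow_natCast (_ ^ ((1:ℝ)/2)) 2, ← Real.rpow_natCast (_ ^ ((1:ℝ)/2)) 2,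
          ← Real.rpow_mul (hI m), ← Real.rpow_mul (hI (m+2))]
        norm_num

/-- Monotonicity of the conditional mean in the observation for the Poisson channel
`Z | X ∼ Poisson(γX)`. Writing `P(z) = (1/z!)·E[(γX)^z e^{−γX}]` for the marginal and,
via the Turing–Good–Robbins formula, `E[X | Z = z] = (1/γ)·(z+1)·P(z+1)/P(z)`, we have for
every `z ≥ 1` with `P(z−1) > 0` and `P(z) > 0` both the log-convexity inequality
`P(z)² ≤ ((z+1)/z)·P(z+1)·P(z−1)` (Cauchy–Schwarz applied to `U = γX`) and the
monotonicity `E[X | Z = z−1] ≤ E[X | Z = z]`. -/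
theorem stmt_14 {Ω : Type*} [MeasurableSpace Ω] (μ : Measure Ω) [IsProbabilityMeasure μ]
    (X : Ω → ℝ) (hXm : Measurable X) (hXnn : ∀ ω, 0 ≤ X ω) (γ : ℝ) (hγ : 0 < γ)
    (P : ℕ → ℝ)
    (hP : ∀ z : ℕ, P z
        = (∫ ω, (γ * X ω) ^ z * Real.exp (-(γ * X ω)) ∂μ) / (Nat.factorial z))
    (z : ℕ) (hz : 1 ≤ z) (h0 : 0 < P (z - 1)) (h1 : 0 < P z) :
    P z ^ 2 ≤ ((z + 1 : ℝ) / z) * P (z + 1) * P (z - 1) ∧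
    (1 / γ) * ((z : ℝ) * P z / P (z - 1))
      ≤ (1 / γ) * ((z + 1 : ℝ) * P (z + 1) / P z) := by
  set U : Ω → ℝ := fun ω => γ * X ω with hU
  have hUm : Measurable U := (measurable_const.mul hXm)
  have hUnn : ∀ ω, 0 ≤ U ω := fun ω => mul_nonneg hγ.le (hXnn ω)
  obtain ⟨m, rfl⟩ : ∃ m : ℕ, z = m + 1 := ⟨z - 1, (Nat.succ_pred_eq_of_pos hz).symm⟩
  simp only [Nat.add_sub_cancel] at h0 ⊢
  set I : ℕ → ℝ := fun n => ∫ ω, U ω ^ n * Real.exp (-(U ω)) ∂μ with hI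
  have hPI : ∀ n : ℕ, P n = I n / n.factorial := fun n => hP n
  have hcs : I (m + 1) ^ 2 ≤ I m * I (m + 2) := cs_aux μ U hUm hUnn m
  have hInn : ∀ n, 0 ≤ I n := fun n =>
    integral_nonneg fun ω => mul_nonneg (pow_nonneg (hUnn ω) n) (Real.exp_pos _).le
  have key : P (m+1) ^ 2 ≤ ((m + 1 + 1 : ℝ) / (m + 1)) * P (m + 2) * P m := by
    rw [hPI, hPI, hPI]
    rw [div_pow, div_le_iff₀ (by positivity)]
    have hf1 : (((m+1).factorial : ℝ)) = (m+1) * m.factorial := by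
      rw [Nat.factorial_succ]; push_cast; ring
    have hf2 : (((m+2).factorial : ℝ)) = (m+2) * (m+1) * m.factorial := by
      rw [show m + 2 = (m+1)+1 from rfl, Nat.factorial_succ, Nat.factorial_succ]; push_cast; ring
    have hm0 : (0:ℝ) < m.factorial := by positivity
    have hm1 : (0:ℝ) < (m:ℝ) + 1 := by positivity
    calc I (m+1) ^ 2 ≤ I m * I (m+2) := hcs
      _ = ((m + 1 + 1 : ℝ) / (m + 1)) * (I (m+2) / (m+2).factorial) * (I m / m.factorial)
          * ((m+1).factorial:ℝ) ^ 2 := by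
          rw [hf1, hf2]; field_simp; ring
  have hP2nn : 0 ≤ P (m + 2) := by rw [hPI]; exact div_nonneg (hInn _) (by positivity)
  refine ⟨by push_cast; push_cast at key; convert key using 3, ?_⟩
  have h2 : ((m:ℝ)+1) * P (m+1) / P m ≤ ((m:ℝ)+1+1) * P (m+2) / P (m+1) := by
    rw [div_le_div_iff₀ h0 h1]
    have hmpos : (0:ℝ) < (m:ℝ) + 1 := by positivity
    push_cast at key
    have h := mul_le_mul_of_nonneg_left key hmpos.le
    have e : ((m:ℝ)+1) * (((m:ℝ) + 1 + 1) / ((m:ℝ) + 1) * P (m + 2) * P m)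
        = ((m:ℝ)+1+1) * P (m+2) * P m := by field_simp
    rw [e] at h
    nlinarith [h]
  have : (0:ℝ) ≤ 1/γ := by positivity
  push_cast
  exact mul_le_mul_of_nonneg_left h2 this
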